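/- For every α ∈ [3/2, 2] and every p ∈ (0,1), the frequency of the digit 0 in the random signed binary expansions, given by π_0(α,p) = (1-p)·μ_p([-1/2,(1-α)/2]) + μ_p(((1-α)/2,(α-1)/2)) + p·μ_p([(α-1)/2,1/2]), equals exactly 1/2, where μ_p is the unique stationary probability measure of the random symmetric doubling map R_α, whose density equals 1/α on [1-α, α-1]. -/

import Mathlib

open MeasureTheory

/-- The two branches `T_{α,0}` (`j = false`) and `T_{α,1}` (`j = true`) of the random
symmetric doubling map. -/
noncomputable def randSymDoubling (α : ℝ) (j : Bool) (x : ℝ) : ℝ :=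
  match j with
  | false => if x ≤ (1-α)/2 then 2*x + α else if x ≤ 1/2 then 2*x else 2*x - α
  | true  => if x < -(1/2) then 2*x + α else if x < (α-1)/2 then 2*x else 2*x - α

/-- For every `α ∈ [3/2,2]` and `p ∈ (0,1)`, with `μ_p` the unique stationary probability
measure of the random symmetric doubling map `R_α`, whose density `f` equals `1/α` on
`[1-α, α-1]`, the frequency of the digit `0`,
`π_0(α,p) = (1-p)·μ_p([-1/2,(1-α)/2]) + μ_p(((1-α)/2,(α-1)/2)) + p·μ_p([(α-1)/2,1/2])`,
equals exactly `1/2`. -/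
theorem stmt17 (α p : ℝ) (hα : α ∈ Set.Icc (3/2 : ℝ) 2) (hp : p ∈ Set.Ioo (0:ℝ) 1)
    (μ : Measure ℝ) (hprob : IsProbabilityMeasure μ)
    (hstat : ∀ B : Set ℝ, MeasurableSet B →
      μ B = ENNReal.ofReal p * μ (randSymDoubling α false ⁻¹' B)
          + ENNReal.ofReal (1-p) * μ (randSymDoubling α true ⁻¹' B))
    (f : ℝ → ℝ)
    (hdens : ∀ B : Set ℝ, MeasurableSet B → μ B = ENNReal.ofReal (∫ x in B, f x))
    (hf : ∀ x ∈ Set.Icc (1-α) (α-1), f x = 1/α) :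
    (1-p) * (μ (Set.Icc (-(1/2) : ℝ) ((1-α)/2))).toReal
      + (μ (Set.Ioo ((1-α)/2) ((α-1)/2))).toReal
      + p * (μ (Set.Icc ((α-1)/2) (1/2 : ℝ))).toReal = 1/2 := by
  obtain ⟨hα1, hα2⟩ := hα
  have hαpos : (0:ℝ) < α := by linarith
  have hcalc : ∀ B : Set ℝ, MeasurableSet B → B ⊆ Set.Icc (1-α) (α-1) →
      μ B = ENNReal.ofReal ((volume B).toReal / α) := by
    intro B hB hsub
    rw [hdens B hB]
    congr 1
    rw [setIntegral_congr_fun hB (fun x hx => hf x (hsub hx)), setIntegral_const,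
      smul_eq_mul, mul_one_div, Measure.real]
  have h1 : (μ (Set.Icc (-(1/2) : ℝ) ((1-α)/2))).toReal = (2-α)/(2*α) := by
    rw [hcalc _ measurableSet_Icc (fun x hx => ⟨by linarith [hx.1], by linarith [hx.2]⟩),
      Real.volume_Icc, ENNReal.toReal_ofReal (by positivity),
      ENNReal.toReal_ofReal (by linarith)]
    field_simp; ring
  have h2 : (μ (Set.Ioo ((1-α)/2) ((α-1)/2))).toReal = (α-1)/α := by
    rw [hcalc _ measurableSet_Ioo (fun x hx => ⟨by linarith [hx.1], by linarith [hx.2]⟩),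
      Real.volume_Ioo, ENNReal.toReal_ofReal (by positivity),
      ENNReal.toReal_ofReal (by linarith)]
    field_simp; ring
  have h3 : (μ (Set.Icc ((α-1)/2) (1/2 : ℝ))).toReal = (2-α)/(2*α) := by
    rw [hcalc _ measurableSet_Icc (fun x hx => ⟨by linarith [hx.1], by linarith [hx.2]⟩),
      Real.volume_Icc, ENNReal.toReal_ofReal (by positivity),
      ENNReal.toReal_ofReal (by linarith)]
    field_simp; ring
  rw [h1, h2, h3]
  field_simp
  ring
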